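/- Restriction lemma for fixed-point iterations (abstract form of the guarded-restriction argument): let F : Set A → Set A be monotone and S ⊆ A a set such that F(P) ∩ S = F(P ∩ S) ∩ S for all P ⊆ A. Define G : Set A → Set A by G(P) := F(P) ∩ S. Then G is monotone; for every ordinal α, G^α(∅) = F^α(∅) ∩ S; the least fixed point of G equals (lfp F) ∩ S; and the closure ordinal of G is at most the closure ordinal of F. -/

import Mathlib

open OrdinalApprox

universe u

/-- The closure ordinal of a monotone operator: the least ordinal `γ` with
`F^{γ+1}(∅) = F^γ(∅)`. -/
noncomputable def closureOrdinal {A : Type u} (F : Set A →o Set A) : Ordinal.{u} :=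
  sInf { γ : Ordinal.{u} | lfpApprox F ⊥ (γ + 1) = lfpApprox F ⊥ γ }

/-- **Restriction lemma for fixed-point iterations.** If `F` is monotone and `S` satisfies
`F(P) ∩ S = F(P ∩ S) ∩ S` for all `P`, then `G(P) := F(P) ∩ S` is monotone, its stages are the
`S`-restrictions of the stages of `F`, its least fixed point is `lfp F ∩ S`, and its closure
ordinal is at most that of `F`. -/
theorem restriction_lemma {A : Type u} (F : Set A → Set A) (hF : Monotone F)
    (S : Set A) (hFS : ∀ P : Set A, F P ∩ S = F (P ∩ S) ∩ S)
    (G : Set A → Set A) (hGdef : G = fun P => F P ∩ S) :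
    ∃ hG : Monotone G,
      (∀ α : Ordinal.{u}, lfpApprox ⟨G, hG⟩ ⊥ α = lfpApprox ⟨F, hF⟩ ⊥ α ∩ S) ∧
      OrderHom.lfp ⟨G, hG⟩ = OrderHom.lfp ⟨F, hF⟩ ∩ S ∧
      closureOrdinal ⟨G, hG⟩ ≤ closureOrdinal ⟨F, hF⟩ := by
  have hG : Monotone G := by
    subst hGdef
    exact fun P Q h => Set.inter_subset_inter_left S (hF h)
  have key : ∀ α : Ordinal.{u}, lfpApprox ⟨G, hG⟩ ⊥ α = lfpApprox ⟨F, hF⟩ ⊥ α ∩ S := by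
    intro α
    induction α using Ordinal.induction with
    | h α ih =>
      rw [lfpApprox, lfpApprox]
      have hstep : ∀ b < α, G (lfpApprox ⟨G, hG⟩ ⊥ b) = F (lfpApprox ⟨F, hF⟩ ⊥ b) ∩ S := by
        intro b hb
        rw [ih b hb, hGdef]
        exact (hFS _).symm
      rw [bot_sup_eq, bot_sup_eq]
      ext x
      simp only [Set.iSup_eq_iUnion, Set.mem_iUnion, Set.mem_inter_iff,
        exists_prop, OrderHom.coe_mk]
      constructor
      · rintro ⟨b, hb, hxt⟩
        rw [hstep b hb] at hxt
        exact ⟨⟨b, hb, hxt.1⟩, hxt.2⟩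
      · rintro ⟨⟨b, hb, hxt⟩, hxS⟩
        refine ⟨b, hb, ?_⟩
        rw [hstep b hb]
        exact ⟨hxt, hxS⟩
  refine ⟨hG, key, ?_, ?_⟩
  · rw [← lfpApprox_ord_eq_lfp (⟨G, hG⟩ : Set A →o Set A),
      ← lfpApprox_ord_eq_lfp (⟨F, hF⟩ : Set A →o Set A)]
    exact key _
  · apply csInf_le_csInf (OrderBot.bddBelow _)
    · refine ⟨Cardinal.ord (Order.succ (Cardinal.mk (Set A))), ?_⟩
      have h1 := lfpApprox_ord_mem_fixedPoint (⟨F, hF⟩ : Set A →o Set A) bot_le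
      simp only [Set.mem_setOf_eq]
      rw [lfpApprox_add_one (⟨F, hF⟩ : Set A →o Set A) bot_le]
      exact h1
    · intro γ hγ
      simp only [Set.mem_setOf_eq] at hγ ⊢
      rw [key, key, hγ]
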